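/- arXiv:2404.08400 — 3 statements merged into one kernel-verified Lean document; each statement's English description precedes it below -/
import Mathlib

section
/- Let T be a tree of order m with diameter d ≥ 2, let ε = ε(T), and let K_n be the complete graph on n ≥ 2 vertices. Then rn(T □ K_n) ≥ (mn − 1)(d + ε) − 2nL(T). -/
open SimpleGraph Finset

namespace RadioPaper

/-- A radio labelling of `G`: `|f u - f v| ≥ diam G + 1 - d(u,v)` for all distinct `u v`. -/
def IsRadioLabelling {α : Type*} [Fintype α] (G : SimpleGraph α) (f : α → ℕ) : Prop :=
  ∀ u v : α, u ≠ v → G.diam + 1 ≤ Nat.dist (f u) (f v) + G.dist u v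

/-- The span of a labelling: the maximum difference between two labels. -/
noncomputable def spanOf {α : Type*} [Fintype α] (f : α → ℕ) : ℕ :=
  Finset.univ.sup fun p : α × α => Nat.dist (f p.1) (f p.2)

/-- The radio number of `G`: the minimum span of a radio labelling of `G`. -/
noncomputable def radioNumber {α : Type*} [Fintype α] (G : SimpleGraph α) : ℕ :=
  sInf { k | ∃ f : α → ℕ, IsRadioLabelling G f ∧ spanOf f = k }

variable {V : Type*} [Fintype V]

/-- The weight of `G` from `v`. -/
noncomputable def weight (G : SimpleGraph V) (v : V) : ℕ := ∑ u, G.dist u v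

/-- The set of weight centers: vertices minimizing the weight. -/
def weightCenters (G : SimpleGraph V) : Set V := {v | ∀ u, weight G v ≤ weight G u}

/-- The level of a vertex: its distance to the nearest weight center. -/
noncomputable def level (G : SimpleGraph V) (u : V) : ℕ :=
  sInf ((fun x => G.dist u x) '' weightCenters G)

/-- The total level of `G`. -/
noncomputable def totalLevel (G : SimpleGraph V) : ℕ := ∑ u, level G u

/-- `ε(G) = 1` if `G` has a unique weight center, `0` otherwise. -/
noncomputable def epsilon (G : SimpleGraph V) : ℕ :=
  if (weightCenters G).ncard = 1 then 1 else 0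

/-- `x` lies on a shortest (= unique, in a tree) path from `a` to `b`. -/
def onPath (G : SimpleGraph V) (a x b : V) : Prop :=
  G.dist a x + G.dist x b = G.dist a b

/-- `x` is a common ancestor of `u` and `v` (tree rooted at its weight centers). -/
def IsCommonAncestor (G : SimpleGraph V) (x u v : V) : Prop :=
  (∃ w ∈ weightCenters G, onPath G w x u) ∧ ∃ w ∈ weightCenters G, onPath G w x v

/-- `φ(u,v)`: the maximum level of a common ancestor of `u` and `v`. -/
noncomputable def phi (G : SimpleGraph V) (u v : V) : ℕ :=
  sSup (level G '' {x | IsCommonAncestor G x u v})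

open scoped Classical in
/-- `δ(u,v) = 1` iff `G` has two weight centers and the `(u,v)`-path contains both. -/
noncomputable def delta (G : SimpleGraph V) (u v : V) : ℕ :=
  if (weightCenters G).ncard = 2 ∧ ∀ x ∈ weightCenters G, onPath G u x v then 1 else 0

/-- `u` and `v` are in different branches: their path contains exactly one weight center. -/
def InDifferentBranches (G : SimpleGraph V) (u v : V) : Prop :=
  {x ∈ weightCenters G | onPath G u x v}.ncard = 1

/-- `u` and `v` are in opposite branches: the tree has two weight centers and the
`(u,v)`-path contains both. -/
def InOppositeBranches (G : SimpleGraph V) (u v : V) : Prop :=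
  (weightCenters G).ncard = 2 ∧ ∀ x ∈ weightCenters G, onPath G u x v

/-- `u` and `v` are in the same branch: their path contains no weight center. -/
def InSameBranch (G : SimpleGraph V) (u v : V) : Prop :=
  ∀ x ∈ weightCenters G, ¬ onPath G u x v


section AuxLemmas

set_option linter.unusedSectionVars false


lemma getVert_mem_support {α : Type*} {G : SimpleGraph α} :
    ∀ {u v : α} (p : G.Walk u v) (i : ℕ), p.getVert i ∈ p.support
  | _, _, .nil, _ => by simp [Walk.getVert]
  | _, _, .cons h q, 0 => by simp [Walk.getVert_zero]
  | _, _, .cons h q, (i+1) => by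
      rw [Walk.getVert_cons_succ, Walk.support_cons]
      exact List.mem_cons_of_mem _ (getVert_mem_support q i)

lemma getVert_ne_of_isPath {α : Type*} {G : SimpleGraph α} :
    ∀ {u v : α} (p : G.Walk u v), p.IsPath → ∀ i j : ℕ, i < j → j ≤ p.length →
      p.getVert i ≠ p.getVert j
  | _, _, .nil, _, i, j, hij, hj => by simp at hj; omega
  | _, _, .cons h q, hp, 0, j, hij, hj => by
      obtain ⟨j, rfl⟩ : ∃ j', j = j' + 1 := ⟨j - 1, by omega⟩
      rw [Walk.getVert_zero, Walk.getVert_cons_succ]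
      rcases (Walk.cons_isPath_iff _ _).mp hp with ⟨hq, hu⟩
      exact fun he => hu (he ▸ getVert_mem_support q j)
  | _, _, .cons h q, hp, (i+1), j, hij, hj => by
      obtain ⟨j, rfl⟩ : ∃ j', j = j' + 1 := ⟨j - 1, by omega⟩
      rw [Walk.getVert_cons_succ, Walk.getVert_cons_succ]
      rcases (Walk.cons_isPath_iff _ _).mp hp with ⟨hq, hu⟩
      exact getVert_ne_of_isPath q hq i j (by omega)
        (by simpa [Walk.length_cons] using hj)

lemma isPath_concat {α : Type*} {G : SimpleGraph α} {u v w : α} {p : G.Walk u v}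
    (hp : p.IsPath) (h : G.Adj v w) (hw : w ∉ p.support) : (p.concat h).IsPath := by
  rw [← Walk.isPath_reverse_iff, Walk.reverse_concat]
  exact Walk.IsPath.cons hp.reverse (by simpa [Walk.support_reverse] using hw)

variable {T : SimpleGraph V}

lemma dist_adj_ne (hT : T.IsTree) {a b : V} (h : T.Adj a b) (x : V) :
    T.dist x a ≠ T.dist x b := by
  classical
  intro heq
  have hc := hT.isConnected
  obtain ⟨p, hp⟩ := hc.exists_walk_length_eq_dist x a
  have hppath : p.IsPath := p.isPath_of_length_eq_dist hp
  have hbp : b ∉ p.support := by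
    intro hb
    have h1 : T.dist x b ≤ (p.takeUntil b hb).length := SimpleGraph.dist_le _
    have h2 : (p.takeUntil b hb).length + (p.dropUntil b hb).length = p.length := by
      rw [← Walk.length_append, Walk.take_spec]
    have h3 : T.dist b a ≤ (p.dropUntil b hb).length := SimpleGraph.dist_le _
    have hba : T.dist b a = 1 := SimpleGraph.dist_eq_one_iff_adj.mpr h.symm
    omega
  obtain ⟨q, hq⟩ := hc.exists_walk_length_eq_dist x b
  have hqpath : q.IsPath := q.isPath_of_length_eq_dist hq
  have hppath' : (p.concat h).IsPath := isPath_concat hppath h hbp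
  have huniq := SimpleGraph.isAcyclic_iff_path_unique.mp hT.IsAcyclic
    ⟨p.concat h, hppath'⟩ ⟨q, hqpath⟩
  have hw : p.concat h = q := congrArg Subtype.val huniq
  have : (p.concat h).length = q.length := by rw [hw]
  rw [Walk.length_concat] at this
  omega

lemma no_two_parents (hT : T.IsTree) {a b c : V} (hab : T.Adj a b) (hcb : T.Adj c b)
    (hac : a ≠ c) (x : V) (hda : T.dist x a + 1 = T.dist x b)
    (hdc : T.dist x c + 1 = T.dist x b) : False := by
  classical
  have hc' := hT.isConnected
  obtain ⟨p, hp⟩ := hc'.exists_walk_length_eq_dist x a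
  have hppath : p.IsPath := p.isPath_of_length_eq_dist hp
  obtain ⟨q, hq⟩ := hc'.exists_walk_length_eq_dist x c
  have hqpath : q.IsPath := q.isPath_of_length_eq_dist hq
  have hbp : b ∉ p.support := by
    intro hb
    have h1 : T.dist x b ≤ (p.takeUntil b hb).length := SimpleGraph.dist_le _
    have h2 : (p.takeUntil b hb).length ≤ p.length := Walk.length_takeUntil_le p hb
    omega
  have hbq : b ∉ q.support := by
    intro hb
    have h1 : T.dist x b ≤ (q.takeUntil b hb).length := SimpleGraph.dist_le _
    have h2 : (q.takeUntil b hb).length ≤ q.length := Walk.length_takeUntil_le q hb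
    omega
  have hppath' : (p.concat hab).IsPath := isPath_concat hppath hab hbp
  have hqpath' : (q.concat hcb).IsPath := isPath_concat hqpath hcb hbq
  have huniq := SimpleGraph.isAcyclic_iff_path_unique.mp hT.IsAcyclic
    ⟨p.concat hab, hppath'⟩ ⟨q.concat hcb, hqpath'⟩
  have hw : p.concat hab = q.concat hcb := congrArg Subtype.val huniq
  have hsup : p.reverse.support = q.reverse.support := by
    have h1 := congrArg Walk.support (congrArg Walk.reverse hw)
    rw [Walk.reverse_concat, Walk.reverse_concat] at h1
    simpa [Walk.support_cons] using h1
  have h1 := Walk.support_eq_cons p.reverse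
  have h2 := Walk.support_eq_cons q.reverse
  rw [hsup] at h1
  rw [h1] at h2
  exact hac (by injection h2)

lemma triple_ineq (hT : T.IsTree) {a b c : V} (hab : T.Adj a b) (hbc : T.Adj b c)
    (hac : a ≠ c) (x : V) :
    (T.dist x b : ℤ) - T.dist x a ≤ (T.dist x c : ℤ) - T.dist x b := by
  have hc' := hT.isConnected
  have t1 : T.dist x b ≤ T.dist x a + T.dist a b := hc'.dist_triangle
  have t2 : T.dist x a ≤ T.dist x b + T.dist b a := hc'.dist_triangle
  have t3 : T.dist x c ≤ T.dist x b + T.dist b c := hc'.dist_triangle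
  have t4 : T.dist x b ≤ T.dist x c + T.dist c b := hc'.dist_triangle
  have e1 : T.dist a b = 1 := SimpleGraph.dist_eq_one_iff_adj.mpr hab
  have e2 : T.dist b a = 1 := SimpleGraph.dist_eq_one_iff_adj.mpr hab.symm
  have e3 : T.dist b c = 1 := SimpleGraph.dist_eq_one_iff_adj.mpr hbc
  have e4 : T.dist c b = 1 := SimpleGraph.dist_eq_one_iff_adj.mpr hbc.symm
  have n1 : T.dist x a ≠ T.dist x b := dist_adj_ne hT hab x
  have n2 : T.dist x b ≠ T.dist x c := dist_adj_ne hT hbc x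
  by_contra hcon
  have hda : T.dist x a + 1 = T.dist x b := by omega
  have hdc : T.dist x c + 1 = T.dist x b := by omega
  exact no_two_parents hT hab (hbc.symm) hac x hda hdc

lemma weight_sub_eq (y z : V) :
    (weight T z : ℤ) - weight T y = ∑ x, ((T.dist x z : ℤ) - T.dist x y) := by
  rw [Finset.sum_sub_distrib]
  simp [weight]

lemma centers_adj (hT : T.IsTree) {c1 c2 : V} (h1 : c1 ∈ weightCenters T)
    (h2 : c2 ∈ weightCenters T) (hne : c1 ≠ c2) : T.Adj c1 c2 := by
  by_contra hadj
  have hc := hT.isConnected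
  have hk0 : 0 < T.dist c1 c2 := hc.pos_dist_of_ne hne
  have hk1 : T.dist c1 c2 ≠ 1 := fun h => hadj (SimpleGraph.dist_eq_one_iff_adj.mp h)
  obtain ⟨p, hp⟩ := hc.exists_walk_length_eq_dist c1 c2
  have hk : 2 ≤ p.length := by omega
  have hppath : p.IsPath := p.isPath_of_length_eq_dist hp
  have hadj' : ∀ i, i < p.length → T.Adj (p.getVert i) (p.getVert (i + 1)) := by
    intro i hi; exact p.adj_getVert_succ hi
  have hne' : ∀ i, i + 1 + 1 ≤ p.length → p.getVert i ≠ p.getVert (i + 1 + 1) := by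
    intro i hi; exact getVert_ne_of_isPath p hppath i (i + 1 + 1) (by omega) (by omega)
  set D : ℕ → ℤ := fun i => (weight T (p.getVert (i + 1)) : ℤ) - weight T (p.getVert i)
    with hD
  have hD0 : 0 ≤ D 0 := by
    have hmin := h1 (p.getVert (0 + 1))
    have h0 : p.getVert 0 = c1 := p.getVert_zero
    simp only [hD, h0]
    omega
  have hstep : ∀ i, i + 1 + 1 ≤ p.length → D i + 2 ≤ D (i + 1) := by
    intro i hi
    have key := fun x => triple_ineq hT (hadj' i (by omega)) (hadj' (i + 1) (by omega))
      (hne' i hi) x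
    have e1 : T.dist (p.getVert (i + 1)) (p.getVert i) = 1 :=
      SimpleGraph.dist_eq_one_iff_adj.mpr (hadj' i (by omega)).symm
    have e2 : T.dist (p.getVert (i + 1)) (p.getVert (i + 1 + 1)) = 1 :=
      SimpleGraph.dist_eq_one_iff_adj.mpr (hadj' (i + 1) (by omega))
    have hsum : (2 : ℤ) ≤ ∑ x, (((T.dist x (p.getVert (i + 1 + 1)) : ℤ)
          - T.dist x (p.getVert (i + 1)))
        - ((T.dist x (p.getVert (i + 1)) : ℤ) - T.dist x (p.getVert i))) := by
      refine le_trans ?_ (Finset.single_le_sum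
        (f := fun x => (((T.dist x (p.getVert (i + 1 + 1)) : ℤ)
            - T.dist x (p.getVert (i + 1)))
          - ((T.dist x (p.getVert (i + 1)) : ℤ) - T.dist x (p.getVert i))))
        (fun x _ => sub_nonneg.mpr (key x)) (Finset.mem_univ (p.getVert (i + 1))))
      show (2 : ℤ) ≤ ((T.dist (p.getVert (i + 1)) (p.getVert (i + 1 + 1)) : ℤ)
          - T.dist (p.getVert (i + 1)) (p.getVert (i + 1)))
        - ((T.dist (p.getVert (i + 1)) (p.getVert (i + 1)) : ℤ)
          - T.dist (p.getVert (i + 1)) (p.getVert i))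
      rw [e1, e2, SimpleGraph.dist_self]
      norm_num
    have hexp : ∑ x, (((T.dist x (p.getVert (i + 1 + 1)) : ℤ)
          - T.dist x (p.getVert (i + 1)))
        - ((T.dist x (p.getVert (i + 1)) : ℤ) - T.dist x (p.getVert i)))
        = D (i + 1) - D i := by
      simp only [hD]
      rw [weight_sub_eq, weight_sub_eq, ← Finset.sum_sub_distrib]
    rw [hexp] at hsum
    omega
  have hDge : ∀ i, i < p.length → 2 * (i : ℤ) ≤ D i := by
    intro i
    induction i with
    | zero => intro _; simpa using hD0
    | succ j ihj =>
      intro hj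
      have hs := hstep j (by omega)
      have := ihj (by omega)
      push_cast
      omega
  have htel : ∑ i ∈ Finset.range p.length, D i
      = (weight T (p.getVert p.length) : ℤ) - weight T (p.getVert 0) :=
    Finset.sum_range_sub (fun i => (weight T (p.getVert i) : ℤ)) p.length
  have hvk : p.getVert p.length = c2 := p.getVert_length
  have hv0 : p.getVert 0 = c1 := p.getVert_zero
  have hle : (weight T c2 : ℤ) - weight T c1 ≤ 0 := by
    have := h2 c1
    omega
  have hge : (2 : ℤ) ≤ ∑ i ∈ Finset.range p.length, D i := by
    have h1' := Finset.single_le_sum (f := D)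
      (fun i hi => le_trans (by positivity) (hDge i (Finset.mem_range.mp hi)))
      (Finset.mem_range.mpr (show 1 < p.length by omega))
    have h2' := hDge 1 (by omega)
    omega
  rw [htel, hvk, hv0] at hge
  omega

lemma weightCenters_nonempty [Nonempty V] (T : SimpleGraph V) :
    (weightCenters T).Nonempty := by
  obtain ⟨c, _, hc⟩ := Finset.exists_min_image Finset.univ (weight T) ⟨Classical.arbitrary V, Finset.mem_univ _⟩
  exact ⟨c, fun u => hc u (Finset.mem_univ u)⟩

lemma exists_level (hW : (weightCenters T).Nonempty) (u : V) :
    ∃ c ∈ weightCenters T, T.dist u c = level T u := by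
  have hne : ((fun x => T.dist u x) '' weightCenters T).Nonempty := hW.image _
  have hmem := Nat.sInf_mem hne
  obtain ⟨c, hc, hdc⟩ := hmem
  exact ⟨c, hc, hdc⟩

lemma level_le {c : V} (hc : c ∈ weightCenters T) (u : V) : level T u ≤ T.dist u c :=
  Nat.sInf_le ⟨c, hc, rfl⟩

lemma epsilon_le_one (T : SimpleGraph V) : epsilon T ≤ 1 := by
  unfold epsilon; split <;> omega

lemma dist_le_level [Nonempty V] (hT : T.IsTree) (u v : V) :
    (T.dist u v : ℤ) ≤ level T u + level T v + 1 - epsilon T := by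
  have hW := weightCenters_nonempty T
  have hc' := hT.isConnected
  by_cases h1 : (weightCenters T).ncard = 1
  · obtain ⟨c, hc⟩ := Set.ncard_eq_one.mp h1
    have hceps : epsilon T = 1 := by simp [epsilon, h1]
    have hlu : level T u = T.dist u c := by
      rw [level, hc, Set.image_singleton, csInf_singleton]
    have hlv : level T v = T.dist v c := by
      rw [level, hc, Set.image_singleton, csInf_singleton]
    have htri : T.dist u v ≤ T.dist u c + T.dist c v := hc'.dist_triangle
    have hcomm : T.dist c v = T.dist v c := SimpleGraph.dist_comm
    rw [hceps, hlu, hlv]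
    push_cast
    omega
  · have hceps : epsilon T = 0 := by simp [epsilon, h1]
    obtain ⟨cu, hcu, hlu⟩ := exists_level hW u
    obtain ⟨cv, hcv, hlv⟩ := exists_level hW v
    have hd1 : T.dist cu cv ≤ 1 := by
      by_cases h : cu = cv
      · simp [h, SimpleGraph.dist_self]
      · exact le_of_eq (SimpleGraph.dist_eq_one_iff_adj.mpr (centers_adj hT hcu hcv h))
    have htri1 : T.dist u v ≤ T.dist u cu + T.dist cu v := hc'.dist_triangle
    have htri2 : T.dist cu v ≤ T.dist cu cv + T.dist cv v := hc'.dist_triangle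
    have hcomm : T.dist cv v = T.dist v cv := SimpleGraph.dist_comm
    rw [hceps]
    push_cast
    omega

-- box product distance
lemma boxwalk_ge (hT : T.IsTree) {n : ℕ} (hn : 2 ≤ n) :
    ∀ {x y : V × Fin n} (w : (T □ (⊤ : SimpleGraph (Fin n))).Walk x y),
      T.dist x.1 y.1 + (⊤ : SimpleGraph (Fin n)).dist x.2 y.2 ≤ w.length := by
  have : Nonempty (Fin n) := ⟨⟨0, by omega⟩⟩
  have hK : (⊤ : SimpleGraph (Fin n)).Connected := connected_top
  have hTc := hT.isConnected
  intro x y w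
  induction w with
  | nil => simp
  | @cons a b c h w ih =>
    rw [Walk.length_cons]
    rcases SimpleGraph.boxProd_adj.mp h with ⟨h1, h2⟩ | ⟨h1, h2⟩
    · have t1 : T.dist a.1 c.1 ≤ T.dist a.1 b.1 + T.dist b.1 c.1 := hTc.dist_triangle
      have e1 : T.dist a.1 b.1 = 1 := SimpleGraph.dist_eq_one_iff_adj.mpr h1
      have t2 : (⊤ : SimpleGraph (Fin n)).dist a.2 c.2
          = (⊤ : SimpleGraph (Fin n)).dist b.2 c.2 := by rw [h2]
      omega
    · have t1 : (⊤ : SimpleGraph (Fin n)).dist a.2 c.2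
          ≤ (⊤ : SimpleGraph (Fin n)).dist a.2 b.2 + (⊤ : SimpleGraph (Fin n)).dist b.2 c.2 :=
        hK.dist_triangle
      have e1 : (⊤ : SimpleGraph (Fin n)).dist a.2 b.2 = 1 :=
        SimpleGraph.dist_eq_one_iff_adj.mpr h1
      have t2 : T.dist a.1 c.1 = T.dist b.1 c.1 := by rw [h2]
      omega

lemma boxdist_ge (hT : T.IsTree) {n : ℕ} (hn : 2 ≤ n) (x y : V × Fin n) :
    T.dist x.1 y.1 + (⊤ : SimpleGraph (Fin n)).dist x.2 y.2
      ≤ (T □ (⊤ : SimpleGraph (Fin n))).dist x y := by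
  have : Nonempty (Fin n) := ⟨⟨0, by omega⟩⟩
  have hK : (⊤ : SimpleGraph (Fin n)).Connected := connected_top
  have hG : (T □ (⊤ : SimpleGraph (Fin n))).Connected := hT.isConnected.boxProd hK
  obtain ⟨w, hw⟩ := hG.exists_walk_length_eq_dist x y
  rw [← hw]
  exact boxwalk_ge hT hn w

lemma boxdist_le (hT : T.IsTree) {n : ℕ} (hn : 2 ≤ n) (s t : V) (a b : Fin n) :
    (T □ (⊤ : SimpleGraph (Fin n))).dist (s, a) (t, b)
      ≤ T.dist s t + (⊤ : SimpleGraph (Fin n)).dist a b := by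
  have : Nonempty (Fin n) := ⟨⟨0, by omega⟩⟩
  have hK : (⊤ : SimpleGraph (Fin n)).Connected := connected_top
  obtain ⟨p, hp⟩ := hT.isConnected.exists_walk_length_eq_dist s t
  obtain ⟨q, hq⟩ := hK.exists_walk_length_eq_dist a b
  have hle := SimpleGraph.dist_le ((p.boxProdLeft (⊤ : SimpleGraph (Fin n)) a).append
    (q.boxProdRight T t))
  rw [Walk.length_append] at hle
  simp only [Walk.boxProdLeft, Walk.boxProdRight, Walk.length_map] at hle
  erw [Walk.length_map, Walk.length_map] at hle
  omega

end AuxLemmas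

/-- lower bound `rn(T □ K_n) ≥ (mn − 1)(d + ε) − 2nL(T)`. -/
theorem radioNumber_lower_bound {V : Type*} [Fintype V]
    (T : SimpleGraph V) (hT : T.IsTree) (m n : ℕ)
    (hm : Fintype.card V = m) (hd : 2 ≤ T.diam) (hn : 2 ≤ n) :
    ((m * n : ℤ) - 1) * (T.diam + epsilon T) - 2 * n * totalLevel T ≤
      (radioNumber (T □ (⊤ : SimpleGraph (Fin n))) : ℤ) := by
  classical
  have hVnt : Nontrivial V := SimpleGraph.nontrivial_of_diam_ne_zero (G := T) (by omega)
  have hVne : Nonempty V := ⟨Classical.arbitrary V⟩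
  have hFn : Nonempty (Fin n) := ⟨⟨0, by omega⟩⟩
  have hKcon : (⊤ : SimpleGraph (Fin n)).Connected := connected_top
  have hTcon := hT.isConnected
  have hGcon : (T □ (⊤ : SimpleGraph (Fin n))).Connected := hTcon.boxProd hKcon
  have hGed : (T □ (⊤ : SimpleGraph (Fin n))).ediam ≠ ⊤ := by
    obtain ⟨u, v, huv⟩ :=
      SimpleGraph.exists_edist_eq_ediam_of_finite (G := T □ (⊤ : SimpleGraph (Fin n)))
    rw [← huv]
    exact SimpleGraph.edist_ne_top_iff_reachable.mpr (hGcon.preconnected u v)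
  -- diameter lower bound
  have hdiamG : T.diam + 1 ≤ (T □ (⊤ : SimpleGraph (Fin n))).diam := by
    obtain ⟨s, t, hst⟩ := SimpleGraph.exists_dist_eq_diam (G := T)
    have hab : (⟨0, by omega⟩ : Fin n) ≠ ⟨1, by omega⟩ := by simp [Fin.ext_iff]
    have hKd : (⊤ : SimpleGraph (Fin n)).dist ⟨0, by omega⟩ ⟨1, by omega⟩ = 1 :=
      SimpleGraph.dist_top_of_ne hab
    have h1 := boxdist_ge hT hn (s, (⟨0, by omega⟩ : Fin n)) (t, ⟨1, by omega⟩)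
    have h2 : (T □ (⊤ : SimpleGraph (Fin n))).dist (s, ⟨0, by omega⟩) (t, ⟨1, by omega⟩)
        ≤ (T □ (⊤ : SimpleGraph (Fin n))).diam := SimpleGraph.dist_le_diam hGed
    simp only at h1
    omega
  -- the set of spans is nonempty
  have hSne : {k | ∃ f : V × Fin n → ℕ,
      IsRadioLabelling (T □ (⊤ : SimpleGraph (Fin n))) f ∧ spanOf f = k}.Nonempty := by
    set e := Fintype.equivFin (V × Fin n) with he
    refine ⟨_, fun v => ((T □ (⊤ : SimpleGraph (Fin n))).diam + 1) * (e v : ℕ), ?_, rfl⟩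
    intro u v huv
    have h1 : (e u : ℕ) ≠ (e v : ℕ) := fun hh => huv (e.injective (Fin.val_injective hh))
    have h2 : 0 < Nat.dist (e u : ℕ) (e v : ℕ) := Nat.dist_pos_of_ne h1
    rw [Nat.dist_mul_left]
    have h3 := Nat.le_mul_of_pos_right ((T □ (⊤ : SimpleGraph (Fin n))).diam + 1) h2
    omega
  have hmemS := Nat.sInf_mem hSne
  obtain ⟨f, hf, hspan⟩ := hmemS
  -- f is injective
  have hinj : Function.Injective f := by
    intro u v huv
    by_contra hne
    have h1 := hf u v hne
    have h2 : (T □ (⊤ : SimpleGraph (Fin n))).dist u v ≤ (T □ (⊤ : SimpleGraph (Fin n))).diam :=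
      SimpleGraph.dist_le_diam hGed
    rw [huv, Nat.dist_self] at h1
    omega
  -- key pairwise bound
  have heps := epsilon_le_one T
  have hkey : ∀ u v : V × Fin n, u ≠ v →
      (T.diam : ℤ) + epsilon T - level T u.1 - level T v.1
        ≤ (Nat.dist (f u) (f v) : ℤ) := by
    intro u v huv
    have h1 := hf u v huv
    have h2 := boxdist_le hT hn u.1 v.1 u.2 v.2
    have h3 : (⊤ : SimpleGraph (Fin n)).dist u.2 v.2 ≤ 1 := by
      by_cases h : u.2 = v.2
      · simp [h, SimpleGraph.dist_self]
      · exact le_of_eq (SimpleGraph.dist_top_of_ne h)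
    have h4 := dist_le_level hT u.1 v.1
    simp only [Prod.mk.eta] at h2
    omega
  -- set up the ordering
  have hcardVn : Fintype.card (V × Fin n) = m * n := by
    simp [Fintype.card_prod, hm]
  have hm2 : 2 ≤ m := by
    have := Fintype.one_lt_card (α := V)
    omega
  have hN2 : 2 ≤ m * n := le_trans (by omega) (Nat.mul_le_mul hm2 hn)
  set N := m * n with hNdef
  have hsc : (Finset.univ.image f).card = N := by
    rw [Finset.card_image_of_injective _ hinj, Finset.card_univ, hcardVn]
  set e2 := (Finset.univ.image f).orderIsoOfFin hsc with he2
  have hmem2 : ∀ i : Fin N, ∃ v : V × Fin n, f v = (e2 i : ℕ) := by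
    intro i
    have h := (e2 i).2
    rw [Finset.mem_image] at h
    obtain ⟨v, _, hv⟩ := h
    exact ⟨v, hv⟩
  choose g hg using hmem2
  have hgmono : ∀ i j : Fin N, i < j → f (g i) < f (g j) := by
    intro i j hij
    rw [hg, hg]
    exact_mod_cast e2.strictMono hij
  have hginj : Function.Injective g := by
    intro i j hij
    by_contra hne
    rcases lt_or_gt_of_ne hne with h | h
    · exact absurd (hgmono _ _ h) (by rw [hij]; exact lt_irrefl _)
    · exact absurd (hgmono _ _ h) (by rw [hij]; exact lt_irrefl _)
  have hgbij : Function.Bijective g :=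
    (Fintype.bijective_iff_injective_and_card g).mpr ⟨hginj, by simp [hcardVn]⟩
  -- level sums
  have hLsum : ∑ x : V × Fin n, level T x.1 = n * totalLevel T := by
    rw [Fintype.sum_prod_type]
    simp [Finset.sum_const, Finset.card_univ, totalLevel, Finset.mul_sum, mul_comm]
  have hgsum : ∑ i : Fin N, level T (g i).1 = n * totalLevel T := by
    rw [← hLsum]
    exact Fintype.sum_bijective g hgbij _ _ (fun i => rfl)
  -- telescoping setup
  set M := N - 1 with hMdef
  have hMN : M + 1 = N := by omega
  set x : ℕ → V × Fin n := fun i => g ⟨min i M, by omega⟩ with hx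
  have hxe : ∀ i (hi : i ≤ M), x i = g ⟨i, by omega⟩ := by
    intro i hi
    simp only [hx]
    congr 1
    exact Fin.ext (by simp [min_eq_left hi])
  set F : ℕ → ℤ := fun i => (f (x i) : ℤ) with hF
  have htel : ∑ i ∈ Finset.range M, (F (i + 1) - F i) = F M - F 0 :=
    Finset.sum_range_sub F M
  have hterm : ∀ i, i < M →
      (T.diam : ℤ) + epsilon T - level T (x i).1 - level T (x (i + 1)).1 ≤ F (i + 1) - F i := by
    intro i hi
    have hne2 : x (i + 1) ≠ x i := by
      rw [hxe _ (by omega), hxe _ (by omega)]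
      intro h
      have := hginj h
      simp [Fin.ext_iff] at this
    have hlt2 : f (x i) < f (x (i + 1)) := by
      rw [hxe _ (by omega), hxe _ (by omega)]
      exact hgmono _ _ (by simp [Fin.lt_def])
    have hd2 := hkey (x (i + 1)) (x i) hne2
    rw [Nat.dist_eq_sub_of_le_right (le_of_lt hlt2)] at hd2
    have hcast : ((f (x (i + 1)) - f (x i) : ℕ) : ℤ) = F (i + 1) - F i := by
      simp only [hF]
      push_cast [Nat.cast_sub (le_of_lt hlt2)]
      ring
    rw [hcast] at hd2
    omega
  have hsum1 : (M : ℤ) * (T.diam + epsilon T)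
      - (∑ i ∈ Finset.range M, (level T (x i).1 : ℤ))
      - (∑ i ∈ Finset.range M, (level T (x (i + 1)).1 : ℤ)) ≤ F M - F 0 := by
    rw [← htel]
    have hs := Finset.sum_le_sum (fun i hi => hterm i (Finset.mem_range.mp hi))
    calc (M : ℤ) * (T.diam + epsilon T)
          - (∑ i ∈ Finset.range M, (level T (x i).1 : ℤ))
          - (∑ i ∈ Finset.range M, (level T (x (i + 1)).1 : ℤ))
        = ∑ i ∈ Finset.range M, ((T.diam : ℤ) + epsilon T
            - level T (x i).1 - level T (x (i + 1)).1) := by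
          rw [Finset.sum_sub_distrib, Finset.sum_sub_distrib, Finset.sum_const,
            Finset.card_range]
          ring
      _ ≤ _ := hs
  -- bounding the level sums
  have hNsum : ∑ i ∈ Finset.range N, (level T (x i).1 : ℤ) = (n : ℤ) * totalLevel T := by
    rw [← Fin.sum_univ_eq_sum_range]
    have : ∀ i : Fin N, (level T (x i.val).1 : ℤ) = (level T (g i).1 : ℤ) := by
      intro i
      rw [hxe i.val (by omega)]
    rw [Finset.sum_congr rfl (fun i _ => this i)]
    rw [← Nat.cast_sum, hgsum]
    push_cast
    ring
  have hA : ∑ i ∈ Finset.range M, (level T (x i).1 : ℤ) ≤ (n : ℤ) * totalLevel T := by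
    rw [← hNsum]
    exact Finset.sum_le_sum_of_subset_of_nonneg
      (Finset.range_subset_range.mpr (by omega)) (by intros; positivity)
  have hB : ∑ i ∈ Finset.range M, (level T (x (i + 1)).1 : ℤ) ≤ (n : ℤ) * totalLevel T := by
    have hsucc := Finset.sum_range_succ' (fun i => (level T (x i).1 : ℤ)) M
    rw [hMN] at hsucc
    have h0 : (0 : ℤ) ≤ (level T (x 0).1 : ℤ) := by positivity
    rw [← hNsum]
    omega
  -- span bound
  have hspan2 : Nat.dist (f (x M)) (f (x 0)) ≤ spanOf f :=
    Finset.le_sup (f := fun p : (V × Fin n) × (V × Fin n) => Nat.dist (f p.1) (f p.2))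
      (Finset.mem_univ (x M, x 0))
  have hM1 : 1 ≤ M := by omega
  have h0M : f (x 0) < f (x M) := by
    rw [hxe _ (by omega), hxe _ (by omega)]
    exact hgmono _ _ (by simp [Fin.lt_def]; omega)
  have hFM : F M - F 0 ≤ (spanOf f : ℤ) := by
    rw [Nat.dist_eq_sub_of_le_right (le_of_lt h0M)] at hspan2
    have hcast : ((f (x M) - f (x 0) : ℕ) : ℤ) = F M - F 0 := by
      simp only [hF]
      push_cast [Nat.cast_sub (le_of_lt h0M)]
      ring
    omega
  -- final assembly
  have hMZ : (M : ℤ) = (m : ℤ) * n - 1 := by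
    have : (N : ℤ) = (m : ℤ) * n := by push_cast [hNdef]; ring
    omega
  have hrn : radioNumber (T □ (⊤ : SimpleGraph (Fin n))) = spanOf f := by
    rw [radioNumber, ← hspan]
  rw [hrn]
  have hfin : ((m * n : ℤ) - 1) * (T.diam + epsilon T) - 2 * n * totalLevel T
      ≤ F M - F 0 := by
    rw [show ((m * n : ℤ) - 1) = (M : ℤ) from hMZ.symm]
    linarith [hsum1, hA, hB]
  linarith [hfin, hFM]


end RadioPaper
end

section
/- Let m ≥ 4 be an even integer and n ≥ 3 an integer, and let P_m be the path on m vertices. Then rn(P_m □ K_n) = (m²n − 2m + 2)/2. -/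
open SimpleGraph Finset

namespace RadioPaper

variable {V : Type*} [Fintype V]

section RadioProof

variable {α β : Type*} {G : SimpleGraph α} {H : SimpleGraph β}

lemma dist_le_of_boxProd_walk (hG : G.Connected) (hH : H.Connected) {x y : α × β}
    (w : (G □ H).Walk x y) : G.dist x.1 y.1 + H.dist x.2 y.2 ≤ w.length := by
  induction w with
  | nil => simp
  | @cons u z y h w ih =>
    rw [SimpleGraph.Walk.length_cons]
    rcases SimpleGraph.boxProd_adj.mp h with ⟨ha, hb⟩ | ⟨ha, hb⟩
    · have h1 : G.dist u.1 y.1 ≤ G.dist u.1 z.1 + G.dist z.1 y.1 := hG.dist_triangle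
      have h2 : G.dist u.1 z.1 ≤ 1 := by
        rw [← SimpleGraph.dist_eq_one_iff_adj] at ha; omega
      have h3 : H.dist u.2 y.2 = H.dist z.2 y.2 := by rw [hb]
      omega
    · have h1 : H.dist u.2 y.2 ≤ H.dist u.2 z.2 + H.dist z.2 y.2 := hH.dist_triangle
      have h2 : H.dist u.2 z.2 ≤ 1 := by
        rw [← SimpleGraph.dist_eq_one_iff_adj] at ha; omega
      have h3 : G.dist u.1 y.1 = G.dist z.1 y.1 := by rw [hb]
      omega

lemma boxProd_dist (hG : G.Connected) (hH : H.Connected) (x y : α × β) :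
    (G □ H).dist x y = G.dist x.1 y.1 + H.dist x.2 y.2 := by
  obtain ⟨x1, x2⟩ := x
  obtain ⟨y1, y2⟩ := y
  refine le_antisymm ?_ ?_
  · obtain ⟨wG, hwG⟩ := hG.exists_walk_length_eq_dist x1 y1
    obtain ⟨wH, hwH⟩ := hH.exists_walk_length_eq_dist x2 y2
    refine (SimpleGraph.dist_le
      ((wG.boxProdLeft (H := H) x2).append (wH.boxProdRight G y1))).trans_eq ?_
    rw [SimpleGraph.Walk.length_append]
    exact congrArg₂ (· + ·) ((SimpleGraph.Walk.length_map _ _).trans hwG) ((SimpleGraph.Walk.length_map _ _).trans hwH)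
  · obtain ⟨w, hw⟩ := (hG.boxProd hH).exists_walk_length_eq_dist (x1, x2) (y1, y2)
    rw [← hw]
    exact dist_le_of_boxProd_walk hG hH w

lemma pathGraph_walk_exists {m : ℕ} : ∀ (d : ℕ) (i j : Fin m), i.val + d = j.val →
    ∃ w : (pathGraph m).Walk i j, w.length = d := by
  intro d
  induction d with
  | zero =>
    intro i j h
    have : i = j := Fin.ext (by omega)
    subst this
    exact ⟨SimpleGraph.Walk.nil, rfl⟩
  | succ d ih =>
    intro i j h
    have hi1 : i.val + 1 < m := by have := j.isLt; omega
    obtain ⟨w, hw⟩ := ih ⟨i.val + 1, hi1⟩ j (by simp; omega)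
    have hadj : (pathGraph m).Adj i ⟨i.val + 1, hi1⟩ := by
      rw [SimpleGraph.pathGraph_adj]; left; rfl
    exact ⟨SimpleGraph.Walk.cons hadj w, by simp [hw]⟩

lemma pathGraph_walk_le {m : ℕ} {i j : Fin m} (w : (pathGraph m).Walk i j) :
    Nat.dist i.val j.val ≤ w.length := by
  induction w with
  | nil => simp [Nat.dist]
  | @cons u z y h w ih =>
    rw [SimpleGraph.pathGraph_adj] at h
    have h2 : Nat.dist u.val z.val ≤ 1 := by
      rcases h with h | h <;> simp [Nat.dist] <;> omega
    have htri : Nat.dist u.val y.val ≤ Nat.dist u.val z.val + Nat.dist z.val y.val :=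
      Nat.dist.triangle_inequality _ _ _
    simp only [SimpleGraph.Walk.length_cons]
    omega

lemma pathGraph_dist {m : ℕ} (i j : Fin m) :
    (pathGraph m).dist i j = Nat.dist i.val j.val := by
  rcases le_total i.val j.val with hle | hle
  · obtain ⟨w, hw⟩ := pathGraph_walk_exists (j.val - i.val) i j (by omega)
    refine le_antisymm ?_ ?_
    · have := SimpleGraph.dist_le w
      rw [hw] at this
      simpa [Nat.dist_eq_sub_of_le hle] using this
    · obtain ⟨w', hw'⟩ := (SimpleGraph.Walk.reachable w).exists_walk_length_eq_dist
      rw [← hw']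
      exact pathGraph_walk_le w'
  · obtain ⟨w, hw⟩ := pathGraph_walk_exists (i.val - j.val) j i (by omega)
    refine le_antisymm ?_ ?_
    · have := SimpleGraph.dist_le w.reverse
      rw [SimpleGraph.Walk.length_reverse, hw] at this
      have hd : Nat.dist i.val j.val = i.val - j.val := by
        rw [Nat.dist_comm]; exact Nat.dist_eq_sub_of_le hle
      omega
    · obtain ⟨w', hw'⟩ := (SimpleGraph.Walk.reachable w.reverse).exists_walk_length_eq_dist
      rw [← hw']
      exact pathGraph_walk_le w'

lemma connected_edist_eq_dist {G : SimpleGraph α} (h : G.Connected) (u v : α) :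
    G.edist u v = (G.dist u v : ℕ∞) := by
  have hr : G.edist u v ≠ ⊤ := SimpleGraph.edist_ne_top_iff_reachable.mpr (h.preconnected u v)
  rw [SimpleGraph.dist]
  exact (ENat.coe_toNat hr).symm

lemma pathConn {m : ℕ} (hm : 4 ≤ m) : (SimpleGraph.pathGraph m).Connected := by
  have h : m = (m - 1) + 1 := by omega
  rw [h]
  exact SimpleGraph.pathGraph_connected _

lemma topConn {n : ℕ} (hn : 3 ≤ n) : (⊤ : SimpleGraph (Fin n)).Connected := by
  have : Nonempty (Fin n) := ⟨⟨0, by omega⟩⟩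
  exact SimpleGraph.connected_top

lemma GConn {m n : ℕ} (hm : 4 ≤ m) (hn : 3 ≤ n) :
    ((SimpleGraph.pathGraph m) □ (⊤ : SimpleGraph (Fin n))).Connected :=
  (pathConn hm).boxProd (topConn hn)

lemma distFormula {m n : ℕ} (hm : 4 ≤ m) (hn : 3 ≤ n) (u v : Fin m × Fin n) :
    ((SimpleGraph.pathGraph m) □ (⊤ : SimpleGraph (Fin n))).dist u v =
      Nat.dist u.1.val v.1.val + (if u.2 = v.2 then 0 else 1) := by
  rw [boxProd_dist (pathConn hm) (topConn hn), pathGraph_dist, SimpleGraph.dist_top]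

lemma diamG {m n : ℕ} (hm : 4 ≤ m) (hn : 3 ≤ n) :
    ((SimpleGraph.pathGraph m) □ (⊤ : SimpleGraph (Fin n))).diam = m := by
  set G := (SimpleGraph.pathGraph m) □ (⊤ : SimpleGraph (Fin n)) with hG
  have hconn := GConn hm hn
  have hdle : ∀ u v : Fin m × Fin n, G.dist u v ≤ m := by
    intro u v
    rw [distFormula hm hn]
    have h1 : Nat.dist u.1.val v.1.val ≤ m - 1 := by
      have := u.1.isLt; have := v.1.isLt
      simp [Nat.dist]; omega
    split <;> omega
  have hediam : G.ediam = (m : ℕ∞) := by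
    refine le_antisymm ?_ ?_
    · refine SimpleGraph.ediam_le_of_edist_le fun u v => ?_
      rw [connected_edist_eq_dist hconn]
      exact_mod_cast hdle u v
    · have hedist : G.edist (⟨0, by omega⟩, ⟨0, by omega⟩) (⟨m - 1, by omega⟩, ⟨1, by omega⟩)
          = (m : ℕ∞) := by
        rw [connected_edist_eq_dist hconn, distFormula hm hn]
        have hne : (⟨0, by omega⟩ : Fin n) ≠ ⟨1, by omega⟩ := by
          intro h; simpa using congrArg Fin.val h
        rw [if_neg hne]
        norm_cast
        simp [Nat.dist]
        omega
      calc (m : ℕ∞) = _ := hedist.symm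
      _ ≤ G.ediam := SimpleGraph.edist_le_ediam
  rw [SimpleGraph.diam, hediam]
  simp


def F0 (c r : ℕ) : ℕ := (r/2) * (2*c - 1) + (r % 2) * c
def FF (c k : ℕ) : ℕ := 2*c^2 * (k/(2*c)) + F0 c (k % (2*c))
def gapF (c r : ℕ) : ℕ := if r = 2*c - 1 then 2*c - 1 else if r % 2 = 0 then c else c - 1
def posC (c r : ℕ) : ℕ := if r % 2 = 0 then c - 1 - r/2 else 2*c - 1 - r/2
def g3 (c r : ℕ) : ℕ := if c % 3 = 1 then (2*r) % 3 else r % 3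

lemma F0_even (c q : ℕ) : F0 c (2*q) = q*(2*c-1) := by
  unfold F0
  have h1 : 2*q/2 = q := by omega
  have h2 : 2*q % 2 = 0 := by omega
  rw [h1, h2]; ring
lemma F0_odd (c q : ℕ) : F0 c (2*q+1) = q*(2*c-1) + c := by
  unfold F0
  have h1 : (2*q+1)/2 = q := by omega
  have h2 : (2*q+1) % 2 = 1 := by omega
  rw [h1, h2]; ring

lemma g3_lt (c r : ℕ) : g3 c r < 3 := by unfold g3; split <;> omega
lemma g3_zero (c : ℕ) : g3 c 0 = 0 := by unfold g3; split <;> rfl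
lemma g3_succ_ne (c r : ℕ) : g3 c r ≠ g3 c (r+1) := by unfold g3; split <;> omega
lemma g3_succ2_ne (c r : ℕ) : g3 c r ≠ g3 c (r+2) := by unfold g3; split <;> omega
lemma g3_junction (c : ℕ) (hc : 2 ≤ c) : g3 c (2*c-1) ≠ 1 := by unfold g3; split <;> omega

lemma succ_mod_lt {k c : ℕ} (hc : 0 < c) (h : k % (2*c) < 2*c - 1) :
    (k+1) % (2*c) = k % (2*c) + 1 ∧ (k+1)/(2*c) = k/(2*c) := by
  have hdm := Nat.div_add_mod k (2*c)
  constructor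
  · rw [show k+1 = 2*c*(k/(2*c)) + (k%(2*c)+1) by omega, Nat.mul_add_mod,
      Nat.mod_eq_of_lt (by omega)]
  · rw [show k+1 = 2*c*(k/(2*c)) + (k%(2*c)+1) by omega, Nat.mul_add_div (by omega)]
    have h0 : (k%(2*c)+1)/(2*c) = 0 := Nat.div_eq_of_lt (by omega)
    omega
lemma succ_mod_eq {k c : ℕ} (hc : 0 < c) (h : k % (2*c) = 2*c-1) :
    (k+1) % (2*c) = 0 ∧ (k+1)/(2*c) = k/(2*c)+1 := by
  have hdm := Nat.div_add_mod k (2*c)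
  have hmul : 2*c*(k/(2*c)+1) = 2*c*(k/(2*c)) + 2*c := by ring
  constructor
  · rw [show k+1 = 2*c*(k/(2*c)+1) by omega, Nat.mul_mod_right]
  · rw [show k+1 = 2*c*(k/(2*c)+1) by omega, Nat.mul_div_cancel_left _ (by omega)]

lemma FF_succ (c k : ℕ) (hc : 2 ≤ c) : FF c (k+1) = FF c k + gapF c (k % (2*c)) := by
  have hrlt : k % (2*c) < 2*c := Nat.mod_lt _ (by omega)
  rcases eq_or_lt_of_le (Nat.lt_iff_add_one_le.mp hrlt) with hj | hj
  · -- junction: r = 2c-1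
    have hr : k % (2*c) = 2*c - 1 := by omega
    obtain ⟨hm1, hd1⟩ := succ_mod_eq (by omega) hr
    unfold FF gapF
    rw [hm1, hd1, hr]
    rw [show 2*c-1 = 2*(c-1)+1 by omega, F0_odd, show 2*(c-1)+1 = 2*c-1 by omega]
    rw [if_pos rfl]
    have e0 : F0 c 0 = 0 := by simpa using F0_even c 0
    rw [e0]
    have hsq : 2*c^2*(k/(2*c)+1) = 2*c^2*(k/(2*c)) + 2*c^2 := by ring
    have hid : (c-1)*(2*c-1) + c + (2*c-1) = 2*c^2 := by
      zify [show 1 ≤ c by omega, show 1 ≤ 2*c by omega]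
      ring
    omega
  · have hr : k % (2*c) < 2*c - 1 := by omega
    obtain ⟨hm1, hd1⟩ := succ_mod_lt (by omega) hr
    unfold FF gapF
    rw [hm1, hd1, if_neg (by omega)]
    rcases Nat.even_or_odd (k % (2*c)) with he | ho
    · obtain ⟨q, hq⟩ := he
      rw [if_pos (by omega), show k % (2*c) = 2*q by omega, show 2*q+1 = 2*q+1 from rfl,
        F0_odd, F0_even]
      omega
    · obtain ⟨q, hq⟩ := ho
      rw [if_neg (by omega), show k % (2*c) = 2*q+1 by omega, show 2*q+1+1 = 2*(q+1) by ring,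
        F0_odd, F0_even]
      have : (q+1)*(2*c-1) = q*(2*c-1) + (2*c-1) := by rw [Nat.succ_mul]
      omega


lemma posC_even (c q : ℕ) : posC c (2*q) = c - 1 - q := by
  unfold posC
  have h1 : 2*q/2 = q := by omega
  have h2 : 2*q % 2 = 0 := by omega
  rw [h1, h2]; simp
lemma posC_odd (c q : ℕ) : posC c (2*q+1) = 2*c - 1 - q := by
  unfold posC
  have h1 : (2*q+1)/2 = q := by omega
  have h2 : (2*q+1) % 2 = 1 := by omega
  rw [h1, h2]; simp

lemma gapF_ge (c r : ℕ) (hc : 2 ≤ c) : c - 1 ≤ gapF c r := by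
  unfold gapF; split
  · omega
  · split <;> omega

lemma posC_inj {c r r' : ℕ} (hc : 2 ≤ c) (hr : r < 2*c) (hr' : r' < 2*c)
    (h : posC c r = posC c r') : r = r' := by
  rcases Nat.even_or_odd r with ⟨q, hq⟩ | ⟨q, hq⟩ <;>
    rcases Nat.even_or_odd r' with ⟨q', hq'⟩ | ⟨q', hq'⟩
  · rw [show r = 2*q by omega, show r' = 2*q' by omega] at h ⊢
    rw [posC_even, posC_even] at h; omega
  · rw [show r = 2*q by omega, show r' = 2*q'+1 by omega] at h ⊢
    rw [posC_even, posC_odd] at h; omega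
  · rw [show r = 2*q+1 by omega, show r' = 2*q' by omega] at h ⊢
    rw [posC_odd, posC_even] at h; omega
  · rw [show r = 2*q+1 by omega, show r' = 2*q'+1 by omega] at h ⊢
    rw [posC_odd, posC_odd] at h; omega


lemma addmod_ne_left {n b x y : ℕ} (hx : x < n) (hy : y < n) (hxy : x ≠ y) :
    (b+x) % n ≠ (b+y) % n := by
  intro h
  have h2 : x ≡ y [MOD n] := Nat.ModEq.add_left_cancel' b h
  exact hxy (h2.eq_of_lt_of_lt hx hy)

lemma addmod_ne_right {n b b' x : ℕ} (hb : b < n) (hb' : b' < n) (hbb : b ≠ b') :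
    (b+x) % n ≠ (b'+x) % n := by
  rw [Nat.add_comm b x, Nat.add_comm b' x]
  exact addmod_ne_left hb hb' hbb

lemma FF_step_ge (c k : ℕ) (hc : 2 ≤ c) : FF c k + (c-1) ≤ FF c (k+1) := by
  rw [FF_succ c k hc]
  have := gapF_ge c (k % (2*c)) hc
  omega

lemma FF_mono (c : ℕ) (hc : 2 ≤ c) : Monotone (FF c) := by
  apply monotone_nat_of_le_succ
  intro k
  have := FF_step_ge c k hc
  omega

lemma FF_two_step (c k : ℕ) (hc : 2 ≤ c) : FF c k + (2*c-1) ≤ FF c (k+2) := by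
  rw [FF_succ c (k+1) hc, FF_succ c k hc]
  have hrlt : k % (2*c) < 2*c := Nat.mod_lt _ (by omega)
  rcases Nat.lt_or_ge (k % (2*c)) (2*c-1) with hr | hr
  · obtain ⟨hm1, _⟩ := succ_mod_lt (by omega) hr
    rw [hm1]
    unfold gapF
    rcases Nat.even_or_odd (k % (2*c)) with ⟨q, hq⟩ | ⟨q, hq⟩
    · rw [if_neg (by omega), if_pos (by omega)]
      split
      · omega
      · rw [if_neg (by omega)]; omega
    · rw [if_neg (by omega), if_neg (by omega), if_neg (by omega), if_pos (by omega)]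
      omega
  · have hr' : k % (2*c) = 2*c-1 := by omega
    have h1 := gapF_ge c ((k+1) % (2*c)) hc
    unfold gapF
    rw [if_pos hr']
    unfold gapF at h1
    omega

lemma FF_ge3 (c : ℕ) {k k' : ℕ} (hc : 2 ≤ c) (h : k+3 ≤ k') : FF c k + (3*c-2) ≤ FF c k' := by
  have h1 := FF_two_step c k hc
  have h2 := FF_step_ge c (k+2) hc
  have h2' : FF c k + (3*c-2) ≤ FF c (k+3) := by
    rw [show k+3 = k+2+1 by omega]
    omega
  have h3 : FF c (k+3) ≤ FF c k' := FF_mono c hc h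
  omega

lemma key (c n : ℕ) (hc : 2 ≤ c) (hn : 3 ≤ n) {k k' : ℕ} (hkk : k < k') (hk' : k' < 2*c*n) :
    FF c k + (2*c+1) ≤ FF c k' + Nat.dist (posC c (k % (2*c))) (posC c (k' % (2*c)))
      + (if (k/(2*c) + g3 c (k % (2*c))) % n = (k'/(2*c) + g3 c (k' % (2*c))) % n
         then 0 else 1) := by
  have hrlt : k % (2*c) < 2*c := Nat.mod_lt _ (by omega)
  have hrlt' : k' % (2*c) < 2*c := Nat.mod_lt _ (by omega)
  have h3 : k' = k+1 ∨ k' = k+2 ∨ k+3 ≤ k' := by omega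
  rcases h3 with rfl | h3
  · -- consecutive
    rw [FF_succ c k hc]
    rcases Nat.lt_or_ge (k % (2*c)) (2*c-1) with hr | hr
    · obtain ⟨hm1, hd1⟩ := succ_mod_lt (by omega) hr
      rw [hm1, hd1]
      rcases Nat.even_or_odd (k % (2*c)) with ⟨q, hq⟩ | ⟨q, hq⟩
      · -- r = 2q even
        have hq' : k % (2*c) = 2*q := by omega
        rw [hq', posC_even, show 2*q+1 = 2*q+1 from rfl, posC_odd]
        rw [if_neg (addmod_ne_left (lt_of_lt_of_le (g3_lt c _) (by omega))
          (lt_of_lt_of_le (g3_lt c _) (by omega)) (g3_succ_ne c (2*q)))]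
        have hgap : gapF c (2*q) = c := by
          unfold gapF; rw [if_neg (by omega), if_pos (by omega)]
        rw [hgap]
        have hd : Nat.dist (c-1-q) (2*c-1-q) = c := by
          unfold Nat.dist; omega
        rw [hd]
        omega
      · -- r odd
        have hq' : k % (2*c) = 2*q+1 := by omega
        have hq2 : q + 2 ≤ c := by omega
        rw [hq', posC_odd, show 2*q+1+1 = 2*(q+1) by ring, posC_even]
        rw [show 2*(q+1) = 2*q+1+1 by ring]
        rw [if_neg (addmod_ne_left (lt_of_lt_of_le (g3_lt c _) (by omega))
          (lt_of_lt_of_le (g3_lt c _) (by omega)) (g3_succ_ne c (2*q+1)))]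
        have hgap : gapF c (2*q+1) = c - 1 := by
          unfold gapF; rw [if_neg (by omega), if_neg (by omega)]
        rw [hgap]
        have hd : Nat.dist (2*c-1-q) (c-1-(q+1)) = c+1 := by
          unfold Nat.dist; omega
        rw [hd]
        omega
    · -- junction
      have hr' : k % (2*c) = 2*c-1 := by omega
      obtain ⟨hm1, hd1⟩ := succ_mod_eq (by omega) hr'
      rw [hm1, hd1, hr']
      have hp1 : posC c (2*c-1) = c := by
        rw [show 2*c-1 = 2*(c-1)+1 by omega, posC_odd]; omega
      have hp0 : posC c 0 = c - 1 := by
        have := posC_even c 0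
        simpa using this
      rw [hp1, hp0, g3_zero]
      have hne : (k/(2*c) + g3 c (2*c-1)) % n ≠ (k/(2*c) + 1 + 0) % n := by
        rw [Nat.add_zero]
        have h1 := g3_junction c hc
        have h2 := g3_lt c (2*c-1)
        rw [show k/(2*c) + 1 = k/(2*c) + 1 from rfl]
        exact addmod_ne_left (by omega) (by omega) (by omega)
      rw [if_neg hne]
      have hgap : gapF c (2*c-1) = 2*c-1 := by unfold gapF; rw [if_pos rfl]
      rw [hgap]
      have hd : Nat.dist c (c-1) = 1 := by unfold Nat.dist; omega
      rw [hd]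
      omega
  rcases h3 with rfl | h3
  · -- two apart
    rw [show k+2 = k+1+1 from rfl, FF_succ c (k+1) hc, FF_succ c k hc]
    rcases Nat.lt_or_ge (k % (2*c)) (2*c-1) with hr | hr
    · obtain ⟨hm1, hd1⟩ := succ_mod_lt (by omega) hr
      rcases Nat.lt_or_ge ((k+1) % (2*c)) (2*c-1) with hr2 | hr2
      · -- both inside block : r ≤ 2c-3
        obtain ⟨hm2, hd2⟩ := succ_mod_lt (by omega) hr2
        rw [hm2, hm1, hd2, hd1]
        rw [hm1] at hr2
        rcases Nat.even_or_odd (k % (2*c)) with ⟨q, hq⟩ | ⟨q, hq⟩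
        · have hq' : k % (2*c) = 2*q := by omega
          have hqc : q + 2 ≤ c := by omega
          rw [hq', posC_even, show 2*q+1+1 = 2*(q+1) by ring, posC_even]
          rw [show 2*(q+1) = 2*q+2 by ring]
          rw [if_neg (addmod_ne_left (lt_of_lt_of_le (g3_lt c _) (by omega))
            (lt_of_lt_of_le (g3_lt c _) (by omega)) (g3_succ2_ne c (2*q)))]
          have hgap : gapF c (2*q) = c := by
            unfold gapF; rw [if_neg (by omega), if_pos (by omega)]
          have hgap2 : gapF c (2*q+1) = c - 1 := by
            unfold gapF; rw [if_neg (by omega), if_neg (by omega)]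
          rw [hgap, hgap2]
          have hd : Nat.dist (c-1-q) (c-1-(q+1)) = 1 := by unfold Nat.dist; omega
          rw [hd]
          omega
        · have hq' : k % (2*c) = 2*q+1 := by omega
          have hqc : q + 2 ≤ c := by omega
          rw [hq', posC_odd, show 2*q+1+1+1 = 2*(q+1)+1 by ring, posC_odd]
          rw [show 2*(q+1)+1 = 2*q+1+2 by ring]
          rw [if_neg (addmod_ne_left (lt_of_lt_of_le (g3_lt c _) (by omega))
            (lt_of_lt_of_le (g3_lt c _) (by omega)) (g3_succ2_ne c (2*q+1)))]
          have hgap : gapF c (2*q+1) = c - 1 := by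
            unfold gapF; rw [if_neg (by omega), if_neg (by omega)]
          have hgap2 : gapF c (2*q+1+1) = c := by
            unfold gapF; rw [if_neg (by omega), if_pos (by omega)]
          rw [hgap, hgap2]
          have hd : Nat.dist (2*c-1-q) (2*c-1-(q+1)) = 1 := by unfold Nat.dist; omega
          rw [hd]
          omega
      · -- r = 2c-2
        have hreq : k % (2*c) = 2*c-2 := by omega
        obtain ⟨hm2, hd2⟩ := succ_mod_eq (c := c) (k := k+1) (by omega) (by omega)
        rw [hm2, hm1, hreq]
        have hgap : gapF c (2*c-2) = c := by
          unfold gapF; rw [if_neg (by omega), if_pos (by omega)]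
        have hgap2 : gapF c (2*c-2+1) = 2*c-1 := by
          unfold gapF; rw [if_pos (by omega)]
        rw [hgap, hgap2]
        have hp : posC c (2*c-2) = 0 := by
          rw [show 2*c-2 = 2*(c-1) by omega, posC_even]; omega
        have hp0 : posC c 0 = c - 1 := by simpa using posC_even c 0
        rw [hp, hp0]
        have hd : Nat.dist 0 (c-1) = c-1 := by unfold Nat.dist; omega
        rw [hd]
        split <;> omega
    · -- r = 2c-1
      have hr' : k % (2*c) = 2*c-1 := by omega
      obtain ⟨hm1, hd1⟩ := succ_mod_eq (by omega) hr'
      have hr2 : (k+1) % (2*c) < 2*c-1 := by omega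
      obtain ⟨hm2, hd2⟩ := succ_mod_lt (c := c) (k := k+1) (by omega) hr2
      rw [hm2, hm1, hr']
      norm_num
      have hgap : gapF c (2*c-1) = 2*c-1 := by unfold gapF; rw [if_pos rfl]
      have hgap2 : gapF c 0 = c := by
        unfold gapF; rw [if_neg (by omega), if_pos (by omega)]
      have hp1 : posC c (2*c-1) = c := by
        rw [show 2*c-1 = 2*(c-1)+1 by omega, posC_odd]; omega
      have hp2 : posC c 1 = 2*c-1 := by
        have := posC_odd c 0
        norm_num at this
        exact this
      rw [hgap, hgap2, hp1, hp2]
      have hd : Nat.dist c (2*c-1) = c-1 := by unfold Nat.dist; omega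
      rw [hd]
      split <;> omega
  · -- three or more apart
    have hFF := FF_ge3 c hc h3
    have hb' : k'/(2*c) < n := Nat.div_lt_iff_lt_mul (by omega) |>.mpr (by rw [Nat.mul_comm]; exact hk')
    have hb : k/(2*c) < n := by
      have hmono : k/(2*c) ≤ k'/(2*c) := Nat.div_le_div_right (by omega)
      omega
    have hD : 1 ≤ Nat.dist (posC c (k % (2*c))) (posC c (k' % (2*c)))
        + (if (k/(2*c) + g3 c (k % (2*c))) % n = (k'/(2*c) + g3 c (k' % (2*c))) % n
           then 0 else 1) := by
      rcases eq_or_ne (posC c (k % (2*c))) (posC c (k' % (2*c))) with hp | hp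
      · have hrr : k % (2*c) = k' % (2*c) := posC_inj hc hrlt hrlt' hp
        have hbb : k/(2*c) ≠ k'/(2*c) := by
          intro hdd
          have e1 := Nat.div_add_mod k (2*c)
          have e2 := Nat.div_add_mod k' (2*c)
          rw [hdd, hrr] at e1
          omega
        rw [hrr, if_neg (addmod_ne_right hb hb' hbb)]
        omega
      · have h1 : 1 ≤ Nat.dist (posC c (k % (2*c))) (posC c (k' % (2*c))) := by
          unfold Nat.dist; omega
        split <;> omega
    omega


-- vertex indexing
def rOf (c i : ℕ) : ℕ := if i < c then 2*(c-1-i) else 2*(2*c-1-i)+1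
def bOf (c n i a : ℕ) : ℕ := (a + n - g3 c (rOf c i)) % n
def kOf (c n i a : ℕ) : ℕ := 2*c*(bOf c n i a) + rOf c i

lemma rOf_lt {c i : ℕ} (hc : 2 ≤ c) (hi : i < 2*c) : rOf c i < 2*c := by
  unfold rOf; split <;> omega

lemma posC_rOf {c i : ℕ} (hc : 2 ≤ c) (hi : i < 2*c) : posC c (rOf c i) = i := by
  unfold rOf
  split
  · rw [posC_even]; omega
  · rw [posC_odd]; omega

lemma bOf_lt {c n i a : ℕ} (hn : 3 ≤ n) : bOf c n i a < n := Nat.mod_lt _ (by omega)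

lemma kOf_div {c n i a : ℕ} (hc : 2 ≤ c) (hi : i < 2*c) :
    kOf c n i a / (2*c) = bOf c n i a ∧ kOf c n i a % (2*c) = rOf c i := by
  unfold kOf
  constructor
  · rw [Nat.mul_add_div (by omega), Nat.div_eq_of_lt (rOf_lt hc hi)]
    omega
  · rw [Nat.mul_add_mod, Nat.mod_eq_of_lt (rOf_lt hc hi)]

lemma kOf_lt {c n i a : ℕ} (hc : 2 ≤ c) (hn : 3 ≤ n) (hi : i < 2*c) :
    kOf c n i a < 2*c*n := by
  unfold kOf
  have h1 : bOf c n i a + 1 ≤ n := bOf_lt hn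
  have h2 : 2*c*(bOf c n i a + 1) ≤ 2*c*n := Nat.mul_le_mul_left _ h1
  have h3 : 2*c*(bOf c n i a + 1) = 2*c*(bOf c n i a) + 2*c := by ring
  have := rOf_lt (c := c) (i := i) hc hi
  omega

lemma color_eq {c n i a : ℕ} (hc : 2 ≤ c) (hn : 3 ≤ n) (ha : a < n) :
    (bOf c n i a + g3 c (rOf c i)) % n = a := by
  unfold bOf
  have hg := g3_lt c (rOf c i)
  rw [Nat.mod_add_mod]
  rw [show a + n - g3 c (rOf c i) + g3 c (rOf c i) = a + n by omega]
  rw [Nat.add_mod_right, Nat.mod_eq_of_lt ha]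

lemma kOf_inj {c n : ℕ} (hc : 2 ≤ c) (hn : 3 ≤ n) {i a i' a' : ℕ}
    (hi : i < 2*c) (ha : a < n) (hi' : i' < 2*c) (ha' : a' < n)
    (h : kOf c n i a = kOf c n i' a') : i = i' ∧ a = a' := by
  obtain ⟨hd, hr⟩ := kOf_div (n := n) (a := a) hc hi
  obtain ⟨hd', hr'⟩ := kOf_div (n := n) (a := a') hc hi'
  have hre : rOf c i = rOf c i' := by rw [← hr, ← hr', h]
  have hbe : bOf c n i a = bOf c n i' a' := by rw [← hd, ← hd', h]
  have hie : i = i' := by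
    rw [← posC_rOf hc hi, ← posC_rOf hc hi', hre]
  refine ⟨hie, ?_⟩
  rw [← color_eq (i := i) (a := a) hc hn ha, ← color_eq (i := i') (a := a') hc hn ha', hbe, hre]

-- the labelling and target span value
def TT (c n : ℕ) : ℕ := 2*c^2*(n-1) + ((c-1)*(2*c-1) + c)

lemma radio_main {m n c : ℕ} (hm : m = 2*c) (hc : 2 ≤ c) (hn : 3 ≤ n) :
    IsRadioLabelling ((SimpleGraph.pathGraph m) □ (⊤ : SimpleGraph (Fin n)))
      (fun v : Fin m × Fin n => FF c (kOf c n v.1.val v.2.val)) := by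
  have hm4 : 4 ≤ m := by omega
  -- helper, for ordered pairs
  have main : ∀ u v : Fin m × Fin n, kOf c n u.1.val u.2.val < kOf c n v.1.val v.2.val →
      2*c + 1 ≤ Nat.dist (FF c (kOf c n u.1.val u.2.val)) (FF c (kOf c n v.1.val v.2.val)) +
        ((SimpleGraph.pathGraph m) □ (⊤ : SimpleGraph (Fin n))).dist u v := by
    intro u v hlt
    have hiu : u.1.val < 2*c := by have := u.1.isLt; omega
    have hiv : v.1.val < 2*c := by have := v.1.isLt; omega
    have hk' : kOf c n v.1.val v.2.val < 2*c*n := kOf_lt hc hn hiv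
    have hkey := key c n hc hn hlt hk'
    obtain ⟨hdu, hru⟩ := kOf_div (n := n) (a := u.2.val) hc hiu
    obtain ⟨hdv, hrv⟩ := kOf_div (n := n) (a := v.2.val) hc hiv
    rw [hdu, hru, hdv, hrv] at hkey
    rw [posC_rOf hc hiu, posC_rOf hc hiv] at hkey
    rw [color_eq hc hn u.2.isLt, color_eq hc hn v.2.isLt] at hkey
    rw [distFormula hm4 hn]
    have hFle : FF c (kOf c n u.1.val u.2.val) ≤ FF c (kOf c n v.1.val v.2.val) :=
      FF_mono c hc (le_of_lt hlt)
    have hite : (if u.2.val = v.2.val then 0 else 1) = (if u.2 = v.2 then (0:ℕ) else 1) := by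
      simp [Fin.ext_iff]
    rw [hite] at hkey
    rw [Nat.dist_eq_sub_of_le hFle]
    omega
  intro u v huv
  dsimp only
  rw [diamG hm4 hn]
  have hiu : u.1.val < 2*c := by have := u.1.isLt; omega
  have hiv : v.1.val < 2*c := by have := v.1.isLt; omega
  have hne : kOf c n u.1.val u.2.val ≠ kOf c n v.1.val v.2.val := by
    intro h
    obtain ⟨h1, h2⟩ := kOf_inj hc hn hiu u.2.isLt hiv v.2.isLt h
    exact huv (Prod.ext (Fin.ext h1) (Fin.ext h2))
  rcases Nat.lt_or_ge (kOf c n u.1.val u.2.val) (kOf c n v.1.val v.2.val) with h | h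
  · have := main u v h
    omega
  · have hlt : kOf c n v.1.val v.2.val < kOf c n u.1.val u.2.val := by omega
    have := main v u hlt
    rw [Nat.dist_comm, SimpleGraph.dist_comm] at this
    omega

lemma span_main {m n c : ℕ} (hm : m = 2*c) (hc : 2 ≤ c) (hn : 3 ≤ n) :
    spanOf (fun v : Fin m × Fin n => FF c (kOf c n v.1.val v.2.val)) = TT c n := by
  have hm4 : 4 ≤ m := by omega
  apply le_antisymm
  · apply Finset.sup_le
    intro p _
    dsimp only
    have hb : ∀ w : Fin m × Fin n, FF c (kOf c n w.1.val w.2.val) ≤ TT c n := by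
      intro w
      have hiw : w.1.val < 2*c := by have := w.1.isLt; omega
      obtain ⟨hd, hr⟩ := kOf_div (n := n) (a := w.2.val) hc hiw
      unfold FF TT
      rw [hd, hr]
      have h1 : bOf c n w.1.val w.2.val ≤ n - 1 := by have := bOf_lt (c:=c) (i:=w.1.val) (a:=w.2.val) hn; omega
      have h2 : 2*c^2*(bOf c n w.1.val w.2.val) ≤ 2*c^2*(n-1) := Nat.mul_le_mul_left _ h1
      have hrlt := rOf_lt (c := c) (i := w.1.val) hc hiw
      have h3 : rOf c w.1.val / 2 ≤ c - 1 := by omega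
      have h4 : (rOf c w.1.val / 2) * (2*c-1) ≤ (c-1)*(2*c-1) := Nat.mul_le_mul_right _ h3
      have h5 : (rOf c w.1.val % 2) * c ≤ 1 * c := Nat.mul_le_mul_right _ (by omega)
      unfold F0
      omega
    have := hb p.1
    have := hb p.2
    unfold Nat.dist
    omega
  · -- attained at ((c, x1), (c-1, 0))
    have hcm : c < m := by omega
    have hcm' : c - 1 < m := by omega
    have hx1 : (n-1 + g3 c (2*c-1)) % n < n := Nat.mod_lt _ (by omega)
    have h0 : (0 : ℕ) < n := by omega
    set u1 : Fin m × Fin n := (⟨c, hcm⟩, ⟨(n-1 + g3 c (2*c-1)) % n, hx1⟩) with hu1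
    set u0 : Fin m × Fin n := (⟨c-1, hcm'⟩, ⟨0, h0⟩) with hu0
    have hf0 : FF c (kOf c n (c-1) 0) = 0 := by
      have hr0 : rOf c (c-1) = 0 := by unfold rOf; rw [if_pos (by omega)]; omega
      have hb0 : bOf c n (c-1) 0 = 0 := by
        unfold bOf
        rw [hr0, g3_zero]
        simp
      unfold FF kOf
      rw [hr0, hb0]
      norm_num [F0]
    have hf1 : FF c (kOf c n c ((n-1 + g3 c (2*c-1)) % n)) = TT c n := by
      have hgl := g3_lt c (2*c-1)
      have hr1 : rOf c c = 2*c-1 := by unfold rOf; rw [if_neg (by omega)]; omega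
      have hb1 : bOf c n c ((n-1 + g3 c (2*c-1)) % n) = n - 1 := by
        unfold bOf
        rw [hr1]
        set g := g3 c (2*c-1) with hg
        have hx : (n - 1 + g) % n = if g = 0 then n - 1 else g - 1 := by
          rcases Nat.lt_or_ge (n - 1 + g) n with h | h
          · rw [Nat.mod_eq_of_lt h, if_pos (by omega)]
            omega
          · rw [Nat.mod_eq_sub_mod h, show n - 1 + g - n = g - 1 by omega,
              Nat.mod_eq_of_lt (by omega), if_neg (by omega)]
        rw [hx]
        split
        · rename_i hgz
          rw [hgz, show n - 1 + n - 0 = (n-1) + n by omega, Nat.add_mod_right,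
            Nat.mod_eq_of_lt (by omega)]
        · rw [show g - 1 + n - g = n - 1 by omega, Nat.mod_eq_of_lt (by omega)]
      have hF0 : F0 c (2*c-1) = (c-1)*(2*c-1) + c := by
        rw [show 2*c-1 = 2*(c-1)+1 by omega, F0_odd, show 2*(c-1)+1 = 2*c-1 by omega]
      unfold FF kOf
      rw [hr1, hb1]
      rw [Nat.mul_add_div (by omega), Nat.mul_add_mod, Nat.div_eq_of_lt (by omega),
        Nat.mod_eq_of_lt (by omega), hF0, Nat.add_zero]
      unfold TT
      omega
    refine le_trans ?_ (Finset.le_sup (f := fun p : (Fin m × Fin n) × (Fin m × Fin n) =>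
      Nat.dist (FF c (kOf c n p.1.1.val p.1.2.val)) (FF c (kOf c n p.2.1.val p.2.2.val)))
      (Finset.mem_univ (u1, u0)))
    show TT c n ≤ Nat.dist (FF c (kOf c n c ((n-1 + g3 c (2*c-1)) % n))) (FF c (kOf c n (c-1) 0))
    rw [hf0, hf1, Nat.dist_zero_right]


lemma sum_levels {m c : ℕ} (hm : m = 2*c) (hc : 2 ≤ c) :
    2 * ∑ i ∈ Finset.range m, (if i < c then c - 1 - i else i - c) = 2*c*(c-1) := by
  have hsplit : ∑ i ∈ Finset.Ico 0 c, (if i < c then c - 1 - i else i - c)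
      + ∑ i ∈ Finset.Ico c m, (if i < c then c - 1 - i else i - c)
      = ∑ i ∈ Finset.Ico 0 m, (if i < c then c - 1 - i else i - c) :=
    Finset.sum_Ico_consecutive _ (by omega) (by omega)
  have h1 : ∑ i ∈ Finset.Ico 0 c, (if i < c then c - 1 - i else i - c)
      = ∑ i ∈ Finset.range c, (c - 1 - i) := by
    rw [← Finset.range_eq_Ico]
    exact Finset.sum_congr rfl fun i hi => by
      rw [if_pos (Finset.mem_range.mp hi)]
  have h2 : ∑ i ∈ Finset.range c, (c - 1 - i) = ∑ i ∈ Finset.range c, i := by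
    have := Finset.sum_range_reflect (fun i => i) c
    simpa using this
  have h3 : ∑ i ∈ Finset.Ico c m, (if i < c then c - 1 - i else i - c)
      = ∑ i ∈ Finset.range c, i := by
    rw [Finset.sum_Ico_eq_sum_range]
    rw [show m - c = c by omega]
    exact Finset.sum_congr rfl fun i hi => by
      rw [if_neg (by omega)]
      omega
  have h4 : (∑ i ∈ Finset.range c, i) * 2 = c * (c - 1) := Finset.sum_range_id_mul_two c
  have h5 : 2*c*(c-1) = 2*(c*(c-1)) := by ring
  rw [Finset.range_eq_Ico] at *
  omega

lemma lower {m n c : ℕ} (hm : m = 2*c) (hc : 2 ≤ c) (hn : 3 ≤ n)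
    (f : Fin m × Fin n → ℕ)
    (hf : IsRadioLabelling ((SimpleGraph.pathGraph m) □ (⊤ : SimpleGraph (Fin n))) f) :
    TT c n ≤ spanOf f := by
  have hm4 : 4 ≤ m := by omega
  set G := (SimpleGraph.pathGraph m) □ (⊤ : SimpleGraph (Fin n)) with hG
  set L : Fin m × Fin n → ℕ := fun v => if v.1.val < c then c - 1 - v.1.val else v.1.val - c
    with hL
  have hdist_le : ∀ u v : Fin m × Fin n, G.dist u v ≤ L u + L v + 2 := by
    intro u v
    rw [distFormula hm4 hn]
    have hu := u.1.isLt
    have hv := v.1.isLt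
    have h1 : Nat.dist u.1.val v.1.val ≤ L u + L v + 1 := by
      simp only [hL, Nat.dist]
      split <;> split <;> omega
    split <;> omega
  set N := 2*c*n with hN
  have hN0 : 0 < N := by
    have := Nat.mul_pos (show 0 < 2*c by omega) (show 0 < n by omega)
    omega
  have hcard : Fintype.card (Fin m × Fin n) = N := by
    rw [Fintype.card_prod, Fintype.card_fin, Fintype.card_fin, hm]
  set e0 : Fin N ≃ (Fin m × Fin n) := (Fintype.equivFinOfCardEq hcard).symm with he0
  set σ : Equiv.Perm (Fin N) := Tuple.sort (f ∘ e0) with hσ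
  set U : ℕ → Fin m × Fin n := fun k => e0 (σ ⟨k % N, Nat.mod_lt _ hN0⟩) with hU
  have hUmono : ∀ k k' : ℕ, k ≤ k' → k' < N → f (U k) ≤ f (U k') := by
    intro k k' hkk hk'
    have := Tuple.monotone_sort (f ∘ e0)
      (a := ⟨k % N, Nat.mod_lt _ hN0⟩) (b := ⟨k' % N, Nat.mod_lt _ hN0⟩)
      (by simp only [Fin.mk_le_mk]
          rw [Nat.mod_eq_of_lt (by omega), Nat.mod_eq_of_lt (by omega)]
          exact hkk)
    simpa [hU] using this
  have hUinj : ∀ k k' : ℕ, k < k' → k' < N → U k ≠ U k' := by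
    intro k k' hkk hk' h
    have h1 : σ ⟨k % N, Nat.mod_lt _ hN0⟩ = σ ⟨k' % N, Nat.mod_lt _ hN0⟩ :=
      e0.injective h
    have h2 := σ.injective h1
    have h3 : k % N = k' % N := congrArg Fin.val h2
    rw [Nat.mod_eq_of_lt (by omega), Nat.mod_eq_of_lt (by omega)] at h3
    omega
  have hstep : ∀ k : ℕ, k + 1 < N →
      f (U k) + (2*c - 1) ≤ f (U (k+1)) + (L (U k) + L (U (k+1))) := by
    intro k hk
    have hne := hUinj k (k+1) (by omega) hk
    have hr := hf (U k) (U (k+1)) hne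
    rw [diamG hm4 hn] at hr
    have hd := hdist_le (U k) (U (k+1))
    have hmono := hUmono k (k+1) (by omega) hk
    rw [Nat.dist_eq_sub_of_le hmono] at hr
    omega
  have ind : ∀ t : ℕ, t < N → t*(2*c-1) + f (U 0) ≤
      f (U t) + ∑ k ∈ Finset.range t, (L (U k) + L (U (k+1))) := by
    intro t
    induction t with
    | zero => simp
    | succ t ih =>
      intro ht
      have h1 := ih (by omega)
      have h2 := hstep t ht
      rw [Finset.sum_range_succ, Nat.succ_mul]
      omega
  have hmain := ind (N-1) (by omega)
  -- bound the sum
  have hsum1 : ∑ k ∈ Finset.range (N-1), (L (U k) + L (U (k+1)))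
      = ∑ k ∈ Finset.range (N-1), L (U k) + ∑ k ∈ Finset.range (N-1), L (U (k+1)) :=
    Finset.sum_add_distrib
  have hsumN : ∑ k ∈ Finset.range N, L (U k) = ∑ v : Fin m × Fin n, L v := by
    rw [← Fin.sum_univ_eq_sum_range (fun k => L (U k)) N]
    have hUk : ∀ k : Fin N, L (U k.val) = L (e0 (σ k)) := by
      intro k
      have hk2 : (⟨k.val % N, Nat.mod_lt _ hN0⟩ : Fin N) = k :=
        Fin.ext (Nat.mod_eq_of_lt k.isLt)
      show L (e0 (σ ⟨k.val % N, Nat.mod_lt _ hN0⟩)) = L (e0 (σ k))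
      rw [hk2]
    rw [Finset.sum_congr rfl (fun k _ => hUk k)]
    exact Equiv.sum_comp (σ.trans e0) L
  have hs1 : ∑ k ∈ Finset.range (N-1), L (U k) ≤ ∑ k ∈ Finset.range N, L (U k) :=
    Finset.sum_le_sum_of_subset (Finset.range_subset_range.mpr (by omega))
  have hs2 : ∑ k ∈ Finset.range (N-1), L (U (k+1)) ≤ ∑ k ∈ Finset.range N, L (U k) := by
    have := Finset.sum_range_succ' (fun k => L (U k)) (N-1)
    rw [show N-1+1 = N by omega] at this
    omega
  -- total level sum
  have hLsum : 2 * ∑ v : Fin m × Fin n, L v = n * (2*c*(c-1)) := by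
    have h1 : ∑ v : Fin m × Fin n, L v
        = ∑ i : Fin m, ∑ a : Fin n, (if i.val < c then c - 1 - i.val else i.val - c) := by
      rw [Fintype.sum_prod_type]
    rw [h1]
    have h2 : ∀ i : Fin m, ∑ a : Fin n, (if i.val < c then c - 1 - i.val else i.val - c)
        = n * (if i.val < c then c - 1 - i.val else i.val - c) := by
      intro i
      rw [Finset.sum_const, Finset.card_univ, Fintype.card_fin]
      simp [Nat.smul_one_eq_cast]
    rw [Finset.sum_congr rfl (fun i _ => h2 i), ← Finset.mul_sum]
    have h3 : ∑ i : Fin m, (if i.val < c then c - 1 - i.val else i.val - c)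
        = ∑ i ∈ Finset.range m, (if i < c then c - 1 - i else i - c) :=
      Fin.sum_univ_eq_sum_range (fun i => if i < c then c - 1 - i else i - c) m
    rw [h3]
    have h5 := sum_levels hm hc
    calc 2 * (n * ∑ i ∈ Finset.range m, (if i < c then c - 1 - i else i - c))
        = n * (2 * ∑ i ∈ Finset.range m, (if i < c then c - 1 - i else i - c)) := by ring
    _ = n * (2*c*(c-1)) := by rw [h5]
  -- span bound
  have hspan : f (U (N-1)) ≤ f (U 0) + spanOf f := by
    have hle := Finset.le_sup (f := fun p : (Fin m × Fin n) × (Fin m × Fin n) =>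
      Nat.dist (f p.1) (f p.2)) (Finset.mem_univ (U (N-1), U 0))
    simp only at hle
    have : Nat.dist (f (U (N-1))) (f (U 0)) ≤ spanOf f := hle
    unfold Nat.dist at this
    omega
  -- final arithmetic
  have hid : (N-1)*(2*c-1) = TT c n + n*(2*c*(c-1)) := by
    unfold TT
    rw [hN]
    have hcn : (1:ℕ) ≤ 2*c*n := Nat.one_le_iff_ne_zero.mpr (by
      intro h
      rcases Nat.mul_eq_zero.mp h with h' | h'
      · omega
      · omega)
    have hcn2 : (1:ℕ) ≤ c*n*2 := le_of_le_of_eq hcn (by ring)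
    zify [hcn, hcn2, show (1:ℕ) ≤ 2*c by omega, show (1:ℕ) ≤ n by omega,
      show (1:ℕ) ≤ c by omega]
    ring
  omega


end RadioProof

/-- for even `m ≥ 4` and `n ≥ 3`,
`rn(P_m □ K_n) = (m²n − 2m + 2)/2` (stated with both sides doubled). -/
theorem radioNumber_path_boxProd_complete_even (m n : ℕ)
    (hm : 4 ≤ m) (hme : Even m) (hn : 3 ≤ n) :
    2 * radioNumber ((SimpleGraph.pathGraph m) □ (⊤ : SimpleGraph (Fin n))) =
      m ^ 2 * n - 2 * m + 2 := by
  obtain ⟨c, hcc⟩ := hme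
  have hmc : m = 2*c := by omega
  have hc : 2 ≤ c := by omega
  have hmem : TT c n ∈ {k | ∃ f : Fin m × Fin n → ℕ,
      IsRadioLabelling ((SimpleGraph.pathGraph m) □ (⊤ : SimpleGraph (Fin n))) f ∧
      spanOf f = k} :=
    ⟨fun v : Fin m × Fin n => FF c (kOf c n v.1.val v.2.val),
      radio_main hmc hc hn, span_main hmc hc hn⟩
  have hlow : ∀ k ∈ {k | ∃ f : Fin m × Fin n → ℕ,
      IsRadioLabelling ((SimpleGraph.pathGraph m) □ (⊤ : SimpleGraph (Fin n))) f ∧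
      spanOf f = k}, TT c n ≤ k := by
    rintro k ⟨f, hf, rfl⟩
    exact lower hmc hc hn f hf
  have hrn : radioNumber ((SimpleGraph.pathGraph m) □ (⊤ : SimpleGraph (Fin n))) = TT c n := by
    unfold radioNumber
    exact le_antisymm (Nat.sInf_le hmem) (hlow _ (Nat.sInf_mem ⟨_, hmem⟩))
  rw [hrn]
  have h1 : m*2 ≤ m*m := Nat.mul_le_mul_left m (by omega)
  have h2 : m*m*1 ≤ m*m*n := Nat.mul_le_mul_left _ (by omega)
  have h3 : m^2*n = m*m*n := by ring
  have h4 : 2*m ≤ m^2*n := by omega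
  unfold TT
  rw [hmc] at h4 ⊢
  zify [h4, show (1:ℕ) ≤ n by omega, show (1:ℕ) ≤ c by omega, show (1:ℕ) ≤ 2*c by omega]
  ring

end RadioPaper
end

section
/- Let T be a tree of order m with diameter d ≥ 2 and |W(T)| = 1, let K_n be the complete graph on n ≥ 2 vertices, and let f be a radio labelling of T □ K_n inducing the ordering w_0, w_1, ..., w_{mn−1} of V(T □ K_n) with 0 = f(w_0) < f(w_1) < ... < f(w_{mn−1}) and w_t = (u_{i_t}, v_{j_t}). Then Σ_{t=0}^{mn−2} d(w_t, w_{t+1}) ≤ 2nL(T) + mn − 1. -/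
open SimpleGraph Finset

namespace RadioPaper

variable {V : Type*} [Fintype V]

lemma boxProd_dist_le' {α β : Type*} (G : SimpleGraph α) (H : SimpleGraph β)
    (hG : G.Connected) (hH : H.Connected) (a c : α) (b d : β) :
    (G □ H).dist (a, b) (c, d) ≤ G.dist a c + H.dist b d := by
  obtain ⟨p, hp⟩ := (hG a c).exists_walk_length_eq_dist
  obtain ⟨q, hq⟩ := (hH b d).exists_walk_length_eq_dist
  have := SimpleGraph.dist_le ((p.boxProdLeft H b).append (q.boxProdRight G c))
  have h1 : (p.boxProdLeft H b).length = p.length := SimpleGraph.Walk.length_map ..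
  have h2 : (q.boxProdRight G c).length = q.length := SimpleGraph.Walk.length_map ..
  rw [SimpleGraph.Walk.length_append, h1, h2, hp, hq] at this
  exact this

/-- Case 1 in the proof of Theorem 3.1: for a tree `T` with one weight
center, any radio labelling `f` of `T □ K_n`, inducing the ordering
`w_0, w_1, …, w_{mn−1}` by increasing labels with `f(w_0) = 0`, satisfies
`Σ_{t=0}^{mn−2} d(w_t, w_{t+1}) ≤ 2nL(T) + mn − 1`. -/
theorem sum_consecutive_dist_le_one_center {V : Type*} [Fintype V]
    (T : SimpleGraph V) (hT : T.IsTree) (m n : ℕ)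
    (hm : Fintype.card V = m) (hd : 2 ≤ T.diam) (hn : 2 ≤ n)
    (hW : (weightCenters T).ncard = 1)
    (f : V × Fin n → ℕ)
    (hf : IsRadioLabelling (T □ (⊤ : SimpleGraph (Fin n))) f)
    (w : ℕ → V × Fin n) (hw : Set.BijOn w (Set.Iio (m * n)) Set.univ)
    (h0 : f (w 0) = 0)
    (hmono : ∀ s t, s < t → t < m * n → f (w s) < f (w t)) :
    ∑ t ∈ Finset.range (m * n - 1),
        (T □ (⊤ : SimpleGraph (Fin n))).dist (w t) (w (t + 1))
      ≤ 2 * n * totalLevel T + (m * n - 1) := by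
  obtain ⟨c, hc⟩ := Set.ncard_eq_one.mp hW
  have hcW : c ∈ weightCenters T := by rw [hc]; exact rfl
  have hTc : T.Connected := hT.isConnected
  have hnne : Nonempty (Fin n) := ⟨⟨0, by omega⟩⟩
  have hKc : (⊤ : SimpleGraph (Fin n)).Connected := connected_top
  -- level = distance to c
  have hlevel : ∀ u : V, level T u = T.dist u c := by
    intro u
    unfold level
    rw [hc, Set.image_singleton, csInf_singleton]
  -- distance bound in T
  have hdistT : ∀ u v : V, T.dist u v ≤ level T u + level T v := by
    intro u v
    rw [hlevel, hlevel]
    calc T.dist u v ≤ T.dist u c + T.dist c v := hTc.dist_triangle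
      _ = T.dist u c + T.dist v c := by rw [SimpleGraph.dist_comm (u := c) (v := v)]
  -- distance bound in K_n
  have hdistK : ∀ a b : Fin n, (⊤ : SimpleGraph (Fin n)).dist a b ≤ 1 := by
    intro a b
    by_cases hab : a = b
    · subst hab; rw [SimpleGraph.dist_self]; exact Nat.zero_le 1
    · have : (⊤ : SimpleGraph (Fin n)).Adj a b := hab
      simpa using SimpleGraph.dist_le (this.toWalk)
  -- per-step bound
  have hstep : ∀ t : ℕ, (T □ (⊤ : SimpleGraph (Fin n))).dist (w t) (w (t + 1))
      ≤ level T (w t).1 + level T (w (t + 1)).1 + 1 := by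
    intro t
    calc (T □ (⊤ : SimpleGraph (Fin n))).dist (w t) (w (t + 1))
        ≤ T.dist (w t).1 (w (t + 1)).1
            + (⊤ : SimpleGraph (Fin n)).dist (w t).2 (w (t + 1)).2 :=
          boxProd_dist_le' T ⊤ hTc hKc _ _ _ _
      _ ≤ (level T (w t).1 + level T (w (t + 1)).1) + 1 :=
          Nat.add_le_add (hdistT _ _) (hdistK _ _)
  -- sum over all indices equals n * totalLevel
  have hsum : ∑ t ∈ Finset.range (m * n), level T (w t).1 = n * totalLevel T := by
    have h1 : ∑ t ∈ Finset.range (m * n), level T (w t).1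
        = ∑ p : V × Fin n, level T p.1 := by
      refine Finset.sum_bij (fun t _ => w t) (fun t _ => Finset.mem_univ _)
        (fun t1 h1 t2 h2 h => hw.injOn (by simpa using h1) (by simpa using h2) h)
        (fun p _ => ?_) (fun t _ => rfl)
      obtain ⟨t, ht, rfl⟩ := hw.surjOn (Set.mem_univ p)
      exact ⟨t, by simpa using ht, rfl⟩
    rw [h1, Fintype.sum_prod_type, totalLevel, Finset.mul_sum]
    simp [mul_comm]
  calc ∑ t ∈ Finset.range (m * n - 1), (T □ (⊤ : SimpleGraph (Fin n))).dist (w t) (w (t + 1))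
      ≤ ∑ t ∈ Finset.range (m * n - 1),
          (level T (w t).1 + level T (w (t + 1)).1 + 1) :=
        Finset.sum_le_sum fun t _ => hstep t
    _ = (∑ t ∈ Finset.range (m * n - 1), level T (w t).1)
        + (∑ t ∈ Finset.range (m * n - 1), level T (w (t + 1)).1) + (m * n - 1) := by
        rw [Finset.sum_add_distrib, Finset.sum_add_distrib, Finset.sum_const,
          Finset.card_range, smul_eq_mul, mul_one]
    _ ≤ (∑ t ∈ Finset.range (m * n), level T (w t).1)
        + (∑ t ∈ Finset.range (m * n), level T (w t).1) + (m * n - 1) := by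
        refine Nat.add_le_add (Nat.add_le_add ?_ ?_) le_rfl
        · exact Finset.sum_le_sum_of_subset
            (Finset.range_subset_range.mpr (Nat.sub_le _ _))
        · rcases Nat.eq_zero_or_pos (m * n) with h | h
          · simp [h]
          · obtain ⟨N, hN⟩ : ∃ N, m * n = N + 1 := ⟨m * n - 1, by omega⟩
            rw [hN, Nat.add_sub_cancel, Finset.sum_range_succ']
            exact Nat.le_add_right _ _
    _ = 2 * n * totalLevel T + (m * n - 1) := by rw [hsum]; ring

end RadioPaper
end
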